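/- If f is a total Boolean function, then RS_u(f) = RS(f). That is, for total functions the sabotage problem restricted to inputs with exactly one sabotaged entry is exactly as hard as the general sabotage problem. -/

import Mathlib

/-! ### Decision trees -/

/-- A deterministic decision tree querying positions of type `ι`, receiving answers
in `α`, and producing an output in `β`. -/
inductive DTree (ι α β : Type) : Type
  | leaf (b : β) : DTree ι α β
  | node (i : ι) (next : α → DTree ι α β) : DTree ι α β

namespace DTree

variable {ι α β : Type}

/-- The output of a decision tree on input `x`. -/
def output : DTree ι α β → (ι → α) → β
  | leaf b, _ => b
  | node i next, x => (next (x i)).output x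

/-- The number of queries made by a decision tree on input `x`. -/
def cost : DTree ι α β → (ι → α) → ℕ
  | leaf _, _ => 0
  | node i next, x => (next (x i)).cost x + 1

/-- The set of positions queried by a decision tree on input `x`. -/
def queries : DTree ι α β → (ι → α) → Set ι
  | leaf _, _ => ∅
  | node i next, x => insert i ((next (x i)).queries x)

end DTree

/-- A partial function on inputs `ι → α` with outputs in `β`; `none` means undefined
(the domain is the set of inputs mapped to `some` value). -/
abbrev PFn (ι α β : Type) := (ι → α) → Option β

/-- `t` computes the partial function `f` (correct on every input of the domain). -/
def DTree.computesP {ι α β : Type} (t : DTree ι α β) (f : PFn ι α β) : Prop :=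
  ∀ x b, f x = some b → t.output x = b

/-- Deterministic query complexity `D(f)`. -/
noncomputable def Dq {ι α β : Type} (f : PFn ι α β) : ℝ :=
  sInf {T : ℝ | 0 ≤ T ∧ ∃ t : DTree ι α β, t.computesP f ∧ ∀ x, (t.cost x : ℝ) ≤ T}

/-! ### Randomized query algorithms -/

/-- A randomized query algorithm: a finitely supported probability distribution over
deterministic decision trees. -/
structure RandAlg (ι α β : Type) where
  Ω : Type
  [fin : Fintype Ω]
  p : Ω → ℝ
  nonneg : ∀ ω, 0 ≤ p ω
  sum_one : ∑ ω, p ω = 1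
  tree : Ω → DTree ι α β

namespace RandAlg

variable {ι α β : Type}

/-- Expected number of queries of `A` on input `x`. -/
noncomputable def expCost (A : RandAlg ι α β) (x : ι → α) : ℝ :=
  letI := A.fin
  ∑ ω, A.p ω * ((A.tree ω).cost x : ℝ)

open Classical in
/-- Probability that `A` outputs `b` on input `x`. -/
noncomputable def succProb (A : RandAlg ι α β) (x : ι → α) (b : β) : ℝ :=
  letI := A.fin
  ∑ ω, if (A.tree ω).output x = b then A.p ω else 0

/-- `A` computes `f` with error at most `ε`: on every input of the domain the correct
output is produced with probability at least `1 - ε`. -/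
def Computes (A : RandAlg ι α β) (f : PFn ι α β) (ε : ℝ) : Prop :=
  ∀ x b, f x = some b → 1 - ε ≤ A.succProb x b

/-- The worst-case cost of `A` (over all inputs and all trees in the support) is at most `T`. -/
def WCostLe (A : RandAlg ι α β) (T : ℝ) : Prop :=
  ∀ ω, A.p ω ≠ 0 → ∀ x, ((A.tree ω).cost x : ℝ) ≤ T

/-- The expected cost of `A` on every input of the domain of `f` is at most `T`. -/
def ECostLe (A : RandAlg ι α β) (f : PFn ι α β) (T : ℝ) : Prop :=
  ∀ x, (f x).isSome → A.expCost x ≤ T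

end RandAlg

/-- `R_ε(f)`: minimum worst-case cost of an `ε`-error randomized algorithm for `f`. -/
noncomputable def Rw {ι α β : Type} (ε : ℝ) (f : PFn ι α β) : ℝ :=
  sInf {T : ℝ | 0 ≤ T ∧ ∃ A : RandAlg ι α β, A.Computes f ε ∧ A.WCostLe T}

/-- `R̄_ε(f)`: minimum expected cost of an `ε`-error randomized algorithm for `f`. -/
noncomputable def Rbar {ι α β : Type} (ε : ℝ) (f : PFn ι α β) : ℝ :=
  sInf {T : ℝ | 0 ≤ T ∧ ∃ A : RandAlg ι α β, A.Computes f ε ∧ A.ECostLe f T}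

/-- `R₀(f)`: zero-error expected randomized query complexity. -/
noncomputable def R0 {ι α β : Type} (f : PFn ι α β) : ℝ := Rbar 0 f

/-- `R(f) := R_{1/3}(f)`: bounded-error randomized query complexity. -/
noncomputable def Rb {ι α β : Type} (f : PFn ι α β) : ℝ := Rw (1/3) f

/-- The total function `f` viewed as a partial function. -/
def tot {ι α β : Type} (f : (ι → α) → β) : PFn ι α β := fun x => some (f x)


/-! ### Sabotage complexity and composition -/

/-- The four-letter alphabet `{0, 1, *, †}` of sabotaged inputs. -/
inductive Sab : Type
  | zero : Sab
  | one : Sab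
  | star : Sab
  | dagger : Sab
deriving DecidableEq

/-- Embedding of Boolean values into the sabotage alphabet. -/
def Sab.ofBool : Bool → Sab
  | false => Sab.zero
  | true => Sab.one

/-- `p` is consistent with the Boolean input `x`: wherever `p` has a Boolean entry,
it agrees with `x`. -/
def SabConsistent {ι : Type} (p : ι → Sab) (x : ι → Bool) : Prop :=
  ∀ i, p i = Sab.ofBool (x i) ∨ p i = Sab.star ∨ p i = Sab.dagger

/-- `p` is a sabotaged input for `f` using the sabotage symbol `s`: all entries of `p`
lie in `{0, 1, s}` and `p` is consistent with both a `0`-input and a `1`-input of `f`. -/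
def IsSabotaged {ι : Type} (f : PFn ι Bool Bool) (s : Sab) (p : ι → Sab) : Prop :=
  (∀ i, p i = Sab.zero ∨ p i = Sab.one ∨ p i = s) ∧
  ∃ x y, (f x).isSome ∧ (f y).isSome ∧ f x ≠ f y ∧ SabConsistent p x ∧ SabConsistent p y

open Classical in
/-- The sabotage problem `f_sab` associated with `f`: it is `0` on `P_f` (inputs
sabotaged with `*`) and `1` on `P_f†` (inputs sabotaged with `†`). -/
noncomputable def fsab {ι : Type} (f : PFn ι Bool Bool) : PFn ι Sab Bool :=
  fun p =>
    if IsSabotaged f Sab.star p then some false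
    else if IsSabotaged f Sab.dagger p then some true
    else none

open Classical in
/-- `f_usab`: the restriction of `f_sab` to inputs having exactly one `*` or `†` entry. -/
noncomputable def fusab {ι : Type} (f : PFn ι Bool Bool) : PFn ι Sab Bool :=
  fun p =>
    if ∃! i, p i = Sab.star ∨ p i = Sab.dagger then fsab f p else none

/-- Randomized sabotage complexity `RS(f) := R₀(f_sab)`. -/
noncomputable def RS {ι : Type} (f : PFn ι Bool Bool) : ℝ := R0 (fsab f)

/-- `RS_u(f) := R₀(f_usab)` (this is `0` automatically when `f_usab` has empty domain). -/
noncomputable def RSu {ι : Type} (f : PFn ι Bool Bool) : ℝ := R0 (fusab f)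

open Classical in
/-- Composition `f ∘ g` of partial functions: defined on an input exactly when every
inner copy of `g` is defined and the tuple of inner values lies in the domain of `f`. -/
noncomputable def pcomp {κ ι α β γ : Type} (f : PFn κ β γ) (g : PFn ι α β) :
    PFn (κ × ι) α γ :=
  fun x =>
    if h : ∀ i : κ, (g fun j => x (i, j)).isSome then
      f fun i => (g fun j => x (i, j)).get (h i)
    else none

/-- Index types for iterated self-composition. -/
def IterIdx (κ : Type) : ℕ → Type
  | 0 => κ
  | n + 1 => κ × IterIdx κ n

/-- `iterComp f n` is `f` composed with itself `n + 1` times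
(`iterComp f 0 = f`, `iterComp f (n+1) = f ∘ iterComp f n`). -/
noncomputable def iterComp {κ : Type} (f : PFn κ Bool Bool) : (n : ℕ) → PFn (IterIdx κ n) Bool Bool
  | 0 => f
  | n + 1 => pcomp f (iterComp f n)

/-! ### The index function -/

/-- The value of a bit-string read as a binary number (bit `i` has weight `2^i`). -/
def binval {b : ℕ} (x : Fin b → Bool) : ℕ := ∑ i, if x i then 2 ^ (i : ℕ) else 0

theorem sum_range_two_pow (b : ℕ) : ∑ i ∈ Finset.range b, 2 ^ i = 2 ^ b - 1 := by
  induction b with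
  | zero => simp
  | succ n ih =>
    rw [Finset.sum_range_succ, ih, pow_succ]
    have : 1 ≤ 2 ^ n := Nat.one_le_two_pow
    omega

theorem binval_lt {b : ℕ} (x : Fin b → Bool) : binval x < 2 ^ b := by
  have h1 : binval x ≤ ∑ i : Fin b, 2 ^ (i : ℕ) := by
    refine Finset.sum_le_sum fun i _ => ?_
    split <;> simp
  have h2 : ∑ i : Fin b, 2 ^ (i : ℕ) = 2 ^ b - 1 := by
    rw [Fin.sum_univ_eq_sum_range (fun i => 2 ^ i) b]
    exact sum_range_two_pow b
  have h3 : 0 < 2 ^ b := Nat.pow_pos (by norm_num)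
  omega

/-- The largest `c` with `c + 2^c ≤ m`. -/
def indexC (m : ℕ) : ℕ := Nat.findGreatest (fun c => c + 2 ^ c ≤ m) m

/-- The index function `Ind_m : {0,1}^m → {0,1}`: the first `c` bits (where `c` is the
largest integer with `c + 2^c ≤ m`) are read as a binary address `y` into the next
`2^c` bits, and the output is the addressed bit. -/
def IndFn (m : ℕ) : PFn (Fin m) Bool Bool :=
  fun x =>
    let c := indexC m
    let y := ∑ i : Fin m, if (i : ℕ) < c ∧ x i = true then 2 ^ (i : ℕ) else 0
    if h : c + y < m then some (x ⟨c + y, h⟩) else none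

/-- `f^{⊕c}_ind`: the index function on `c + 2^c` bits with `f` composed into each of
the `c` address bits only. -/
def findex {n : ℕ} (f : PFn (Fin n) Bool Bool) (c : ℕ) :
    PFn ((Fin c × Fin n) ⊕ Fin (2 ^ c)) Bool Bool :=
  fun x =>
    if h : ∀ i : Fin c, (f fun j => x (Sum.inl (i, j))).isSome then
      some (x (Sum.inr ⟨binval fun i => (f fun j => x (Sum.inl (i, j))).get (h i),
        binval_lt _⟩))
    else none


/-! ### Auxiliary development for `RSu_eq_RS_of_total` -/

namespace RSuAux

open Function

/-- Truncation of a decision tree: as soon as a sabotage symbol is seen, output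
the corresponding answer. -/
def trunc {ι : Type} : DTree ι Sab Bool → DTree ι Sab Bool
  | .leaf b => .leaf b
  | .node i next => .node i fun a =>
      match a with
      | Sab.zero => trunc (next Sab.zero)
      | Sab.one => trunc (next Sab.one)
      | Sab.star => .leaf false
      | Sab.dagger => .leaf true

lemma output_agree {ι : Type} (t : DTree ι Sab Bool) :
    ∀ x y : ι → Sab, (∀ i ∈ t.queries x, y i = x i) → t.output y = t.output x := by
  induction t with
  | leaf b => intro x y _; rfl
  | node i next ih =>
    intro x y h
    have hi : y i = x i := h i (by simp [DTree.queries])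
    simp only [DTree.output, hi]
    exact ih (x i) x y fun j hj => h j (by simp only [DTree.queries, Set.mem_insert_iff]; exact Or.inr hj)

lemma trunc_main {ι : Type} (s : Sab) (hs : s = Sab.star ∨ s = Sab.dagger)
    (p q : ι → Sab) (i₀ : ι)
    (hps : ∀ i, p i = Sab.zero ∨ p i = Sab.one ∨ p i = s)
    (hagree : ∀ i, (p i = Sab.zero ∨ p i = Sab.one) → q i = p i)
    (hp0 : p i₀ = s) :
    ∀ t : DTree ι Sab Bool, i₀ ∈ t.queries q →
      (trunc t).output p = (if s = Sab.star then false else true) ∧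
      (trunc t).cost p ≤ t.cost q := by
  intro t
  induction t with
  | leaf b => intro h; simp [DTree.queries] at h
  | node i next ih =>
    intro h
    rcases hps i with hz | hz | hz
    · have hqi : q i = p i := hagree i (Or.inl hz)
      have hne : i ≠ i₀ := by
        intro e; rw [e, hp0] at hz; rcases hs with hs' | hs' <;> rw [hs'] at hz <;> exact absurd hz (by simp)
      have hmem : i₀ ∈ (next (q i)).queries q := by
        simp only [DTree.queries, Set.mem_insert_iff] at h
        rcases h with h | h
        · exact absurd h.symm hne
        · exact h
      obtain ⟨h1, h2⟩ := ih (q i) hmem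
      rw [hqi, hz] at h1 h2
      constructor
      · simp only [trunc, DTree.output, hz]
        exact h1
      · simp only [trunc, DTree.cost, hz, hqi]
        omega
    · have hqi : q i = p i := hagree i (Or.inr hz)
      have hne : i ≠ i₀ := by
        intro e; rw [e, hp0] at hz; rcases hs with hs' | hs' <;> rw [hs'] at hz <;> exact absurd hz (by simp)
      have hmem : i₀ ∈ (next (q i)).queries q := by
        simp only [DTree.queries, Set.mem_insert_iff] at h
        rcases h with h | h
        · exact absurd h.symm hne
        · exact h
      obtain ⟨h1, h2⟩ := ih (q i) hmem
      rw [hqi, hz] at h1 h2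
      constructor
      · simp only [trunc, DTree.output, hz]
        exact h1
      · simp only [trunc, DTree.cost, hz, hqi]
        omega
    · rcases hs with hs' | hs' <;> subst hs' <;>
        constructor <;>
        simp [trunc, DTree.output, DTree.cost, hz]

lemma all_correct {ι α : Type} (A : RandAlg ι α Bool) (g : PFn ι α Bool)
    (hA : A.Computes g 0) {x : ι → α} {b : Bool} (hx : g x = some b)
    {ω : A.Ω} (hω : A.p ω ≠ 0) :
    (A.tree ω).output x = b := by
  classical
  letI := A.fin
  by_contra hne
  have h1 : (1 : ℝ) ≤ A.succProb x b := by
    have := hA x b hx; linarith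
  have hsum : A.succProb x b + A.p ω ≤ 1 := by
    have hle : (∑ ω', ((if (A.tree ω').output x = b then A.p ω' else 0) +
        (if ω' = ω then A.p ω else 0))) ≤ ∑ ω', A.p ω' := by
      refine Finset.sum_le_sum fun ω' _ => ?_
      by_cases he : ω' = ω
      · subst he
        simp [hne, A.nonneg ω']
      · have := A.nonneg ω'
        split_ifs <;> simp_all
    rw [Finset.sum_add_distrib, Finset.sum_ite_eq' Finset.univ ω (fun _ => A.p ω)] at hle
    simp only [Finset.mem_univ, if_pos] at hle
    rw [A.sum_one] at hle
    have hsp : A.succProb x b = ∑ ω', (if (A.tree ω').output x = b then A.p ω' else 0) := by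
      unfold RandAlg.succProb
      exact Finset.sum_congr rfl fun ω' _ => by split_ifs <;> rfl
    rw [hsp]
    exact hle
  have := A.nonneg ω
  have : A.p ω = 0 := by linarith
  exact hω this

/-- The sensitivity walk: if `f x ≠ f y` there is a point `z` between `x` and `y`
which is sensitive at a coordinate where `x` and `y` differ. -/
lemma path_sens {n : ℕ} (f : (Fin n → Bool) → Bool) :
    ∀ (k : ℕ) (x y : Fin n → Bool),
      (Finset.univ.filter fun i => x i ≠ y i).card ≤ k → f x ≠ f y →
      ∃ z i₀, (∀ i, x i = y i → z i = x i) ∧ x i₀ ≠ y i₀ ∧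
        f z ≠ f (Function.update z i₀ (!(z i₀))) := by
  intro k
  induction k with
  | zero =>
    intro x y hcard hne
    exfalso
    apply hne
    have hxy : x = y := by
      funext i
      by_contra hi
      have : i ∈ Finset.univ.filter fun i => x i ≠ y i := by simp [hi]
      have := Finset.card_pos.mpr ⟨i, this⟩
      omega
    rw [hxy]
  | succ k ih =>
    intro x y hcard hne
    have hxy : x ≠ y := fun h => hne (by rw [h])
    obtain ⟨j, hj⟩ := Function.ne_iff.mp hxy
    by_cases hfy' : f x = f (Function.update y j (x j))
    · refine ⟨Function.update y j (x j), j, ?_, hj, ?_⟩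
      · intro i hxi
        have hij : i ≠ j := fun h => hj (h ▸ hxi)
        rw [Function.update_of_ne hij]
        exact hxi.symm
      · have hb : (!(Function.update y j (x j) j)) = y j := by
          rw [Function.update_self]
          cases hx : x j <;> cases hy : y j <;> simp_all
        rw [hb]
        have : Function.update (Function.update y j (x j)) j (y j) = y := by
          rw [Function.update_idem, Function.update_eq_self]
        rw [this, ← hfy']
        exact hne
    · have hsub : (Finset.univ.filter fun i => x i ≠ Function.update y j (x j) i) ⊆
          (Finset.univ.filter fun i => x i ≠ y i).erase j := by
        intro i hi
        simp only [Finset.mem_filter, Finset.mem_univ, true_and] at hi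
        have hij : i ≠ j := by
          intro e; subst e; rw [Function.update_self] at hi; exact hi rfl
        rw [Function.update_of_ne hij] at hi
        simp [Finset.mem_erase, hij, hi]
      have hjmem : j ∈ Finset.univ.filter fun i => x i ≠ y i := by simp [hj]
      have hcard' : (Finset.univ.filter fun i => x i ≠ Function.update y j (x j) i).card ≤ k := by
        have h1 := Finset.card_le_card hsub
        have h2 := Finset.card_erase_of_mem hjmem
        have h3 := Finset.card_pos.mpr ⟨j, hjmem⟩
        omega
      obtain ⟨z, i₀, h1, h2, h3⟩ := ih x (Function.update y j (x j)) hcard' hfy'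
      refine ⟨z, i₀, ?_, ?_, h3⟩
      · intro i hxi
        have hij : i ≠ j := fun h => hj (h ▸ hxi)
        exact h1 i (by rw [Function.update_of_ne hij]; exact hxi)
      · by_cases he : i₀ = j
        · subst he; exact hj
        · rw [Function.update_of_ne he] at h2; exact h2

lemma ofBool_inj {a b : Bool} (h : Sab.ofBool a = Sab.ofBool b) : a = b := by
  cases a <;> cases b <;> simp_all [Sab.ofBool]

lemma ofBool_bool (a : Bool) : Sab.ofBool a = Sab.zero ∨ Sab.ofBool a = Sab.one := by
  cases a <;> simp [Sab.ofBool]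

/-- Key combinatorial lemma: from any sabotaged input for a total `f` one can extract a
singly-sabotaged input agreeing with it on Boolean positions, whose flip is also
singly-sabotaged. -/
lemma key {n : ℕ} (f : (Fin n → Bool) → Bool) (s : Sab)
    (hs : s = Sab.star ∨ s = Sab.dagger) (p : Fin n → Sab)
    (h : IsSabotaged (tot f) s p) :
    ∃ (q : Fin n → Sab) (i₀ : Fin n),
      (∀ i, (p i = Sab.zero ∨ p i = Sab.one) → q i = p i) ∧
      q i₀ = s ∧ p i₀ = s ∧
      (∀ i, i ≠ i₀ → q i = Sab.zero ∨ q i = Sab.one) ∧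
      IsSabotaged (tot f) s q ∧
      IsSabotaged (tot f) (if s = Sab.star then Sab.dagger else Sab.star)
        (Function.update q i₀ (if s = Sab.star then Sab.dagger else Sab.star)) := by
  classical
  obtain ⟨hE, x, y, -, -, hfxy, hcx, hcy⟩ := h
  have hfxy' : f x ≠ f y := by
    intro e; exact hfxy (by simp [tot, e])
  have hboolagree : ∀ i, (p i = Sab.zero ∨ p i = Sab.one) → x i = y i := by
    intro i hi
    have h1 := hcx i
    have h2 := hcy i
    have hx1 : p i = Sab.ofBool (x i) := by
      rcases h1 with h1 | h1 | h1
      · exact h1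
      all_goals rcases hi with hi | hi <;> rw [hi] at h1 <;> exact absurd h1 (by simp)
    have hy1 : p i = Sab.ofBool (y i) := by
      rcases h2 with h2 | h2 | h2
      · exact h2
      all_goals rcases hi with hi | hi <;> rw [hi] at h2 <;> exact absurd h2 (by simp)
    exact ofBool_inj (hx1 ▸ hy1)
  obtain ⟨z, i₀, hz1, hz2, hz3⟩ :=
    path_sens f (Finset.univ.filter fun i => x i ≠ y i).card x y le_rfl hfxy'
  have hpi₀ : p i₀ = s := by
    have h1 := hcx i₀
    have h2 := hcy i₀
    have hnb : ¬ (p i₀ = Sab.zero ∨ p i₀ = Sab.one) := by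
      intro hb; exact hz2 (hboolagree i₀ hb)
    rcases hE i₀ with he | he | he
    · exact absurd (Or.inl he) hnb
    · exact absurd (Or.inr he) hnb
    · exact he
  set q : Fin n → Sab := fun i => if i = i₀ then s else Sab.ofBool (z i) with hqdef
  have hq0 : q i₀ = s := by simp [hqdef]
  have hqother : ∀ i, i ≠ i₀ → q i = Sab.ofBool (z i) := by
    intro i hi; simp [hqdef, hi]
  have hsnb : s ≠ Sab.zero ∧ s ≠ Sab.one := by
    rcases hs with hs | hs <;> subst hs <;> exact ⟨by simp, by simp⟩
  have hagree : ∀ i, (p i = Sab.zero ∨ p i = Sab.one) → q i = p i := by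
    intro i hi
    have hne : i ≠ i₀ := by
      intro e; subst e; rw [hpi₀] at hi
      rcases hi with hi | hi
      · exact hsnb.1 hi
      · exact hsnb.2 hi
    rw [hqother i hne]
    have hzx : z i = x i := hz1 i (hboolagree i hi)
    have hx1 : p i = Sab.ofBool (x i) := by
      rcases hcx i with h1 | h1 | h1
      · exact h1
      all_goals rcases hi with hi | hi <;> rw [hi] at h1 <;> exact absurd h1 (by simp)
    rw [hzx, ← hx1]
  set z' := Function.update z i₀ (!(z i₀)) with hz'def
  have hfz : tot f z ≠ tot f z' := by
    intro e; exact hz3 (by simpa [tot] using e)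
  have hconsz : SabConsistent q z := by
    intro i
    by_cases hi : i = i₀
    · subst hi; rw [hq0]
      rcases hs with hs | hs <;> subst hs <;> simp
    · left; rw [hqother i hi]
  have hconsz' : SabConsistent q z' := by
    intro i
    by_cases hi : i = i₀
    · subst hi; rw [hq0]
      rcases hs with hs | hs <;> subst hs <;> simp
    · left; rw [hqother i hi, hz'def, Function.update_of_ne hi]
  have hsab_q : IsSabotaged (tot f) s q := by
    refine ⟨fun i => ?_, z, z', by simp [tot], by simp [tot], hfz, hconsz, hconsz'⟩
    by_cases hi : i = i₀
    · subst hi; right; right; exact hq0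
    · rw [hqother i hi]
      rcases ofBool_bool (z i) with h' | h'
      · exact Or.inl h'
      · exact Or.inr (Or.inl h')
  set s' := if s = Sab.star then Sab.dagger else Sab.star with hs'def
  have hs' : s' = Sab.star ∨ s' = Sab.dagger := by
    rcases hs with hs | hs <;> subst hs <;> simp [hs'def]
  have hsab_q' : IsSabotaged (tot f) s' (Function.update q i₀ s') := by
    refine ⟨fun i => ?_, z, z', by simp [tot], by simp [tot], hfz, ?_, ?_⟩
    · by_cases hi : i = i₀
      · subst hi; right; right; rw [Function.update_self]
      · rw [Function.update_of_ne hi]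
        rw [hqother i hi]
        rcases ofBool_bool (z i) with h' | h'
        · exact Or.inl h'
        · exact Or.inr (Or.inl h')
    · intro i
      by_cases hi : i = i₀
      · subst hi; rw [Function.update_self]
        rcases hs' with h' | h' <;> rw [h'] <;> simp
      · rw [Function.update_of_ne hi]
        left; rw [hqother i hi]
    · intro i
      by_cases hi : i = i₀
      · subst hi; rw [Function.update_self]
        rcases hs' with h' | h' <;> rw [h'] <;> simp
      · rw [Function.update_of_ne hi]
        left; rw [hqother i hi, hz'def, Function.update_of_ne hi]
  refine ⟨q, i₀, hagree, hq0, hpi₀, ?_, hsab_q, hsab_q'⟩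
  intro i hi
  rw [hqother i hi]
  exact ofBool_bool (z i)

lemma not_star_sab_of_dagger {n : ℕ} (F : PFn (Fin n) Bool Bool) {q : Fin n → Sab}
    {i₀ : Fin n} (h : q i₀ = Sab.dagger) : ¬ IsSabotaged F Sab.star q := by
  rintro ⟨hE, -⟩
  rcases hE i₀ with he | he | he <;> rw [h] at he <;> exact absurd he (by simp)

lemma fusab_eval {n : ℕ} (F : PFn (Fin n) Bool Bool) (q : Fin n → Sab) (i₀ : Fin n)
    (s : Sab) (hs : s = Sab.star ∨ s = Sab.dagger) (hq0 : q i₀ = s)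
    (hqother : ∀ i, i ≠ i₀ → q i = Sab.zero ∨ q i = Sab.one)
    (hsab : IsSabotaged F s q) :
    fusab F q = some (if s = Sab.star then false else true) := by
  classical
  have huniq : ∃! i, q i = Sab.star ∨ q i = Sab.dagger := by
    refine ⟨i₀, ?_, ?_⟩
    · show q i₀ = Sab.star ∨ q i₀ = Sab.dagger
      rw [hq0]; rcases hs with h | h <;> rw [h] <;> simp
    · intro j hj
      by_contra hne
      rcases hqother j hne with h' | h' <;> rw [h'] at hj <;>
        rcases hj with hj | hj <;> exact absurd hj (by simp)
  unfold fusab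
  rw [if_pos huniq]
  unfold fsab
  rcases hs with h | h <;> subst h
  · rw [if_pos hsab]; simp
  · rw [if_neg (not_star_sab_of_dagger F hq0), if_pos hsab]; simp

/-- Main lemma packaging: for any input in the domain of `fsab (tot f)` there are the
singly-sabotaged witnesses needed. -/
lemma master {n : ℕ} (f : (Fin n → Bool) → Bool) (p : Fin n → Sab) (b : Bool)
    (hp : fsab (tot f) p = some b) :
    ∃ (q : Fin n → Sab) (i₀ : Fin n) (s : Sab),
      (s = Sab.star ∨ s = Sab.dagger) ∧
      (∀ i, p i = Sab.zero ∨ p i = Sab.one ∨ p i = s) ∧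
      (∀ i, (p i = Sab.zero ∨ p i = Sab.one) → q i = p i) ∧
      p i₀ = s ∧
      b = (if s = Sab.star then false else true) ∧
      fusab (tot f) q = some b ∧
      fusab (tot f) (Function.update q i₀ (if s = Sab.star then Sab.dagger else Sab.star))
        = some (!b) := by
  classical
  unfold fsab at hp
  split_ifs at hp with h1 h2
  · -- star sabotaged, b = false
    have hb : b = false := by injection hp with h; exact h.symm
    subst hb
    obtain ⟨q, i₀, hagree, hq0, hp0, hother, hsq, hsq'⟩ :=
      key f Sab.star (Or.inl rfl) p h1
    refine ⟨q, i₀, Sab.star, Or.inl rfl, h1.1, hagree, hp0, by simp, ?_, ?_⟩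
    · have := fusab_eval (tot f) q i₀ Sab.star (Or.inl rfl) hq0 hother hsq
      simpa using this
    · simp only [if_pos rfl] at hsq' ⊢
      have := fusab_eval (tot f) (Function.update q i₀ Sab.dagger) i₀ Sab.dagger
        (Or.inr rfl) (Function.update_self _ _ _) ?_ hsq'
      · simpa using this
      · intro i hi
        rw [Function.update_of_ne hi]
        exact hother i hi
  · -- dagger sabotaged, b = true
    have hb : b = true := by injection hp with h; exact h.symm
    subst hb
    obtain ⟨q, i₀, hagree, hq0, hp0, hother, hsq, hsq'⟩ :=
      key f Sab.dagger (Or.inr rfl) p h2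
    have hds : (Sab.dagger = Sab.star) = False := by simp
    refine ⟨q, i₀, Sab.dagger, Or.inr rfl, h2.1, hagree, hp0, by simp, ?_, ?_⟩
    · have := fusab_eval (tot f) q i₀ Sab.dagger (Or.inr rfl) hq0 hother hsq
      simpa using this
    · simp only [hds, if_false] at hsq' ⊢
      have := fusab_eval (tot f) (Function.update q i₀ Sab.star) i₀ Sab.star
        (Or.inl rfl) (Function.update_self _ _ _) ?_ hsq'
      · simpa using this
      · intro i hi
        rw [Function.update_of_ne hi]
        exact hother i hi

lemma fusab_some {n : ℕ} (F : PFn (Fin n) Bool Bool) {x : Fin n → Sab} {b : Bool}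
    (h : fusab F x = some b) : fsab F x = some b := by
  unfold fusab at h
  split_ifs at h
  exact h

end RSuAux

/-- **For total functions, one sabotaged entry suffices:** `RS_u(f) = RS(f)` for every
total Boolean function `f`. -/
theorem RSu_eq_RS_of_total {n : ℕ} (f : (Fin n → Bool) → Bool) :
    RSu (tot f) = RS (tot f) := by
  classical
  unfold RSu RS R0 Rbar
  congr 1
  ext T
  simp only [Set.mem_setOf_eq]
  constructor
  · -- hard direction: an algorithm for `fusab` yields one for `fsab` via truncation
    rintro ⟨hT0, A, hComp, hCost⟩
    letI := A.fin
    set B : RandAlg (Fin n) Sab Bool :=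
      { Ω := A.Ω, fin := A.fin, p := A.p, nonneg := A.nonneg, sum_one := A.sum_one,
        tree := fun ω => RSuAux.trunc (A.tree ω) } with hBdef
    have main : ∀ (x : Fin n → Sab) (b : Bool), fsab (tot f) x = some b →
        ∃ q : Fin n → Sab, fusab (tot f) q = some b ∧
          ∀ ω : A.Ω, A.p ω ≠ 0 →
            (RSuAux.trunc (A.tree ω)).output x = b ∧
            (RSuAux.trunc (A.tree ω)).cost x ≤ (A.tree ω).cost q := by
      intro x b hx
      obtain ⟨q, i₀, s, hs, hps, hagree, hp0, hb, hq, hq'⟩ := RSuAux.master f x b hx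
      refine ⟨q, hq, fun ω hω => ?_⟩
      have hout_q : (A.tree ω).output q = b :=
        RSuAux.all_correct A (fusab (tot f)) hComp hq hω
      have hout_q' : (A.tree ω).output
          (Function.update q i₀ (if s = Sab.star then Sab.dagger else Sab.star)) = !b :=
        RSuAux.all_correct A (fusab (tot f)) hComp hq' hω
      have hmem : i₀ ∈ (A.tree ω).queries q := by
        by_contra hnm
        have hag : ∀ i ∈ (A.tree ω).queries q,
            Function.update q i₀ (if s = Sab.star then Sab.dagger else Sab.star) i = q i := by
          intro i hi
          have hne : i ≠ i₀ := fun e => hnm (e ▸ hi)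
          exact Function.update_of_ne hne _ _
        have := RSuAux.output_agree (A.tree ω) q _ hag
        rw [hout_q, hout_q'] at this
        simp at this
      obtain ⟨ho, hc⟩ := RSuAux.trunc_main s hs x q i₀ hps hagree hp0 (A.tree ω) hmem
      exact ⟨by rw [ho, ← hb], hc⟩
    refine ⟨hT0, B, ?_, ?_⟩
    · intro x b hx
      obtain ⟨q, hq, hall⟩ := main x b hx
      have : B.succProb x b = 1 := by
        have hsp : B.succProb x b =
            ∑ ω, if (RSuAux.trunc (A.tree ω)).output x = b then A.p ω else 0 := by
          unfold RandAlg.succProb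
          exact Finset.sum_congr rfl fun ω' _ => by split_ifs <;> rfl
        rw [hsp, ← A.sum_one]
        refine Finset.sum_congr rfl fun ω _ => ?_
        by_cases h0 : A.p ω = 0
        · split_ifs <;> simp [h0]
        · rw [if_pos (hall ω h0).1]
      rw [this]
      norm_num
    · intro x hx
      obtain ⟨b, hb⟩ := Option.isSome_iff_exists.mp hx
      obtain ⟨q, hq, hall⟩ := main x b hb
      have h1 : B.expCost x ≤ A.expCost q := by
        show (∑ ω, A.p ω * ((RSuAux.trunc (A.tree ω)).cost x : ℝ)) ≤
          ∑ ω, A.p ω * (((A.tree ω)).cost q : ℝ)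
        refine Finset.sum_le_sum fun ω _ => ?_
        by_cases h0 : A.p ω = 0
        · simp [h0]
        · exact mul_le_mul_of_nonneg_left (Nat.cast_le.mpr (hall ω h0).2) (A.nonneg ω)
      have h2 : A.expCost q ≤ T := hCost q (by rw [hq]; rfl)
      linarith
  · -- easy direction: an algorithm for `fsab` restricts to `fusab`
    rintro ⟨hT0, A, hComp, hCost⟩
    refine ⟨hT0, A, fun x b hx => hComp x b (RSuAux.fusab_some _ hx), fun x hx => ?_⟩
    obtain ⟨b, hb⟩ := Option.isSome_iff_exists.mp hx
    exact hCost x (by rw [RSuAux.fusab_some _ hb]; rfl)
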